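/- Let F be an algebraically closed field of characteristic 0 and n > 1. Every nilpotent matrix A ∈ Mₙ(F) can be written as an additive commutator EG − GE of two idempotent matrices E, G ∈ Mₙ(F). -/
import Mathlib

open Polynomial DirectSum
open scoped DirectSum


private lemma exists_sqrt_poly (F : Type*) [Field F] [CharZero F] (m : ℕ) :
    ∃ q : F[X], q.eval 0 = 1 ∧ X ^ (m + 1) ∣ q ^ 2 - (1 + 4 * X) := by
  induction m with
  | zero =>
    refine ⟨1, by simp, ?_⟩
    have h : (1 : F[X]) ^ 2 - (1 + 4 * X) = X ^ 1 * (-4) := by ring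
    exact ⟨-4, h⟩
  | succ m ih =>
    obtain ⟨q, hq0, r, hr⟩ := ih
    set c : F := -(r.eval 0) / 2 with hc
    refine ⟨q + C c * X ^ (m + 1), by simp [hq0], ?_⟩
    have key : (q + C c * X ^ (m + 1)) ^ 2 - (1 + 4 * X)
        = X ^ (m + 1) * (r + 2 * q * C c + X ^ (m + 1) * C c ^ 2) := by
      have expand : (q + C c * X ^ (m + 1)) ^ 2 - (1 + 4 * X)
          = (q ^ 2 - (1 + 4 * X)) + X ^ (m + 1) * (2 * q * C c)
            + X ^ (m + 1) * (X ^ (m + 1) * C c ^ 2) := by ring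
      rw [expand, hr]; ring
    rw [key, pow_succ]
    apply mul_dvd_mul_left
    rw [X_dvd_iff]
    simp only [coeff_add, coeff_zero_eq_eval_zero, eval_mul, eval_add, eval_pow, eval_X,
      eval_ofNat, eval_C, hq0]
    rw [hc]
    ring_nf

private lemma commute_aeval {F : Type*} [Field F] {n : ℕ}
    {S B : Matrix (Fin n) (Fin n) F} (h : Commute S B) (p : F[X]) :
    Commute S (aeval B p) := by
  induction p using Polynomial.induction_on' with
  | add p q hp hq => rw [map_add]; exact hp.add_right hq
  | monomial k a =>
    rw [aeval_monomial]
    have hca : Commute S ((algebraMap F (Matrix (Fin n) (Fin n) F)) a) :=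
      (Algebra.commutes a S).symm
    exact hca.mul_right (h.pow_right k)

private lemma commutator_of_involution {F : Type*} [Field F] [CharZero F] {n : ℕ}
    (A S : Matrix (Fin n) (Fin n) F) (hA : IsNilpotent A)
    (hS : S * S = 1) (hSA : S * A = -(A * S)) :
    ∃ E G : Matrix (Fin n) (Fin n) F,
      IsIdempotentElem E ∧ IsIdempotentElem G ∧ A = E * G - G * E := by
  obtain ⟨k, hk⟩ := hA
  obtain ⟨q, -, r, hr⟩ := exists_sqrt_poly F k
  set B : Matrix (Fin n) (Fin n) F := A * A with hB
  set Q : Matrix (Fin n) (Fin n) F := aeval B q with hQdef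
  have hABc : Commute A B := (Commute.refl A).mul_right (Commute.refl A)
  have hQA : Commute A Q := commute_aeval hABc q
  have h1 : A * S = -(S * A) := by rw [hSA, neg_neg]
  have hSB : Commute S B := by
    show S * (A * A) = A * A * S
    calc S * (A * A) = S * A * A := by rw [mul_assoc]
    _ = -(A * S) * A := by rw [hSA]
    _ = -(A * (S * A)) := by rw [neg_mul, mul_assoc]
    _ = -(A * -(A * S)) := by rw [hSA]
    _ = A * A * S := by rw [mul_neg, neg_neg, mul_assoc]
  have hQS : Commute S Q := commute_aeval hSB q
  -- Q * Q = 1 + (B + B + B + B)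
  have hq2 : Q * Q = 1 + (B + B + B + B) := by
    have := congrArg (aeval B) hr.symm
    simp only [map_sub, map_add, map_mul, map_pow, map_one, aeval_X, map_ofNat] at this
    have hBk : B ^ (k + 1) = 0 := by
      rw [hB, (Commute.refl A).mul_pow, pow_succ, hk, zero_mul, zero_mul]
    rw [hBk, zero_mul] at this
    have this2 := (eq_of_sub_eq_zero this.symm)
    have h4 : (4 : Matrix (Fin n) (Fin n) F) * B = B + B + B + B := by
      rw [show (4 : Matrix (Fin n) (Fin n) F) = 1 + 1 + 1 + 1 by norm_num]
      rw [add_mul, add_mul, add_mul, one_mul]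
    rw [← hQdef] at this2
    rw [← sq, this2, h4]
  set T : Matrix (Fin n) (Fin n) F := S * (Q + (A + A)) with hT
  have hswap : (Q + (A + A)) * S = S * (Q - (A + A)) := by
    rw [add_mul, add_mul, h1, ← hQS.eq, mul_sub, mul_add]
    abel
  have hST : S * T = Q + (A + A) := by rw [hT, ← mul_assoc, hS, one_mul]
  have hTS : T * S = Q - (A + A) := by
    rw [hT, mul_assoc, hswap, ← mul_assoc, hS, one_mul]
  have hTT : T * T = 1 := by
    have e0 : T * T = S * ((Q + (A + A)) * S) * (Q + (A + A)) := by
      rw [hT]; noncomm_ring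
    rw [e0, hswap, ← mul_assoc, hS, one_mul]
    have e1 : (Q - (A + A)) * (Q + (A + A))
        = Q * Q + ((Q * A + Q * A) - (A * Q + A * Q))
          - (A * A + A * A + A * A + A * A) := by noncomm_ring
    rw [e1, hQA.eq, hq2, ← hB]
    abel
  -- the idempotents
  set c : F := (2 : F)⁻¹ with hcdef
  have hcc : c * c * 2 = c := by rw [hcdef]; norm_num
  have hidem : ∀ U : Matrix (Fin n) (Fin n) F, U * U = 1 →
      IsIdempotentElem (c • (1 + U)) := by
    intro U hU
    show c • (1 + U) * c • (1 + U) = c • (1 + U)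
    rw [smul_mul_smul_comm]
    have : (1 + U) * (1 + U) = (1 + U) + (1 + U) := by
      have e : (1 + U) * (1 + U) = 1 + U + U + U * U := by noncomm_ring
      rw [e, hU]; abel
    rw [this, ← two_smul F (1 + U), smul_smul, hcc]
  refine ⟨c • (1 + S), c • (1 + T), hidem S hS, hidem T hTT, ?_⟩
  rw [smul_mul_smul_comm, smul_mul_smul_comm, ← smul_sub]
  have e2 : (1 + S) * (1 + T) - (1 + T) * (1 + S) = S * T - T * S := by noncomm_ring
  rw [e2, hST, hTS]
  have e3 : Q + (A + A) - (Q - (A + A)) = (4 : F) • A := by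
    rw [show (4 : F) = 1 + 1 + 1 + 1 by norm_num, add_smul, add_smul, add_smul, one_smul]
    abel
  rw [e3, smul_smul, hcdef]
  norm_num

set_option maxHeartbeats 1000000 in
private lemma exists_anticommuting_involution (F : Type*) [Field F] {n : ℕ}
    (A : Matrix (Fin n) (Fin n) F) (hA : IsNilpotent A) :
    ∃ S : Matrix (Fin n) (Fin n) F, S * S = 1 ∧ S * A = -(A * S) := by
  classical
  obtain ⟨k, hk⟩ := hA
  set f : Module.End F (Fin n → F) := Matrix.toLinAlgEquiv' A with hf
  have hfk : f ^ k = 0 := by rw [hf, ← map_pow, hk, map_zero]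
  -- the F[X]-module induced by f
  have hXk : ∀ m : Module.AEval' f, (X : F[X]) ^ k • m = 0 := by
    intro m
    apply (Module.AEval'.of f).symm.injective
    rw [Module.AEval.of_symm_smul, map_pow, aeval_X, hfk, map_zero]
    simp
  have htor : Module.IsTorsion F[X] (Module.AEval' f) := by
    intro m
    exact ⟨⟨X ^ k, mem_nonZeroDivisors_of_ne_zero (pow_ne_zero _ X_ne_zero)⟩, hXk m⟩
  obtain ⟨ι, hι, p, hp, e, ⟨φ⟩⟩ := Module.equiv_directSum_of_isTorsion htor
  set I : ι → Ideal F[X] := fun i => Ideal.span {p i ^ e i} with hI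
  -- each factor is killed by X ^ k
  have hkill : ∀ i, p i ^ e i ∣ X ^ k := by
    intro i
    have h0 : (X : F[X]) ^ k •
        (DirectSum.of (fun i => F[X] ⧸ I i) i (Submodule.Quotient.mk 1)) = 0 := by
      have h1 := hXk (φ.symm (DirectSum.of (fun i => F[X] ⧸ I i) i (Submodule.Quotient.mk 1)))
      have h2 := congrArg φ h1
      rw [map_smul, map_zero, φ.apply_symm_apply] at h2
      exact h2
    have h3 := congrArg (fun z => z i) h0
    simp only [DirectSum.smul_apply, DirectSum.of_eq_same, DirectSum.zero_apply] at h3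
    rw [← Submodule.Quotient.mk_smul, smul_eq_mul, mul_one] at h3
    rw [Submodule.Quotient.mk_eq_zero] at h3
    exact (Ideal.mem_span_singleton).mp h3
  -- the involution X ↦ -X on F[X]
  set σh : F[X] →ₐ[F] F[X] := aeval (-X) with hσh
  have hσX : σh X = -X := by rw [hσh, aeval_X]
  have hσσ : σh.comp σh = AlgHom.id F F[X] := by
    apply Polynomial.algHom_ext
    rw [AlgHom.comp_apply, hσX, map_neg, hσX, neg_neg, AlgHom.id_apply]
  set σ : F[X] ≃ₐ[F] F[X] := AlgEquiv.ofAlgHom σh σh hσσ hσσ with hσ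
  have hσ_inv : ∀ g : F[X], σh (σh g) = g := fun g => by
    have := congrArg (fun ψ => ψ g) hσσ
    simpa using this
  -- each ideal is σ-stable
  have hmap : ∀ i, (I i).map (σ : F[X] →+* F[X]) = I i := by
    intro i
    have hcoe : ∀ g : F[X], (σ : F[X] →+* F[X]) g = σh g := fun g => rfl
    rw [hI]
    rw [Ideal.map_span, Set.image_singleton]
    rcases Nat.eq_zero_or_pos (e i) with h0 | hpos
    · simp [h0, hcoe]
    · have hprime : Prime (p i) := (hp i).prime
      have hdvdp : p i ∣ X ^ k := dvd_trans (dvd_pow_self _ hpos.ne') (hkill i)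
      have hdvd : p i ∣ X := hprime.dvd_of_dvd_pow hdvdp
      have hassoc : Associated (p i) X := (hp i).associated_of_dvd irreducible_X hdvd
      have hassoc2 : Associated (σh (p i)) (σh X) :=
        hassoc.map (σh.toRingHom.toMonoidHom)
      rw [hσX] at hassoc2
      have hnegX : Associated (-X : F[X]) X := ⟨-1, by simp⟩
      have hfinal : Associated (σh (p i)) (p i) :=
        (hassoc2.trans hnegX).trans hassoc.symm
      rw [Ideal.span_singleton_eq_span_singleton]
      have hps : (σ : F[X] →+* F[X]) (p i ^ e i) = σh (p i) ^ e i := by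
        rw [hcoe, map_pow]
      rw [hps]
      exact hfinal.pow_pow
  -- the involution on each quotient
  set s : ∀ i, (F[X] ⧸ I i) ≃ₐ[F] (F[X] ⧸ I i) :=
    fun i => Ideal.quotientEquivAlg (I i) (I i) σ (hmap i).symm with hs
  have hs_mk : ∀ i x, s i (Submodule.Quotient.mk x) = Submodule.Quotient.mk (σh x) := by
    intro i x
    rfl
  -- involution and twist on each factor
  have hss : ∀ i (z : F[X] ⧸ I i), s i (s i z) = z := by
    intro i z
    obtain ⟨x, rfl⟩ := Submodule.Quotient.mk_surjective _ z
    rw [hs_mk, hs_mk, hσ_inv]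
  have hsX : ∀ i (z : F[X] ⧸ I i), s i ((X : F[X]) • z) = -((X : F[X]) • s i z) := by
    intro i z
    obtain ⟨x, rfl⟩ := Submodule.Quotient.mk_surjective _ z
    rw [← Submodule.Quotient.mk_smul, smul_eq_mul, hs_mk, hs_mk]
    have hx : σh (X * x) = -(X * σh x) := by rw [map_mul, hσX, neg_mul]
    rw [hx, ← smul_eq_mul, Submodule.Quotient.mk_neg, Submodule.Quotient.mk_smul]
  -- assemble the involution on the direct sum
  set Ts : (⨁ i, F[X] ⧸ I i) →ₗ[F] (⨁ i, F[X] ⧸ I i) :=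
    DFinsupp.mapRange.linearMap (fun i => (s i).toLinearMap) with hTs
  have hTs_apply : ∀ (y : ⨁ i, F[X] ⧸ I i) i, Ts y i = s i (y i) := by
    intro y i
    rw [hTs]
    exact DFinsupp.mapRange_apply _ (fun i => map_zero _) y i
  have hTsTs : ∀ y, Ts (Ts y) = y := by
    intro y
    refine DFinsupp.ext fun i => ?_
    rw [hTs_apply, hTs_apply, hss]
  have hTsX : ∀ y : ⨁ i, F[X] ⧸ I i, Ts ((X : F[X]) • y) = -((X : F[X]) • Ts y) := by
    intro y
    refine DFinsupp.ext fun i => ?_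
    rw [hTs_apply, DirectSum.smul_apply, hsX, DFinsupp.neg_apply, DirectSum.smul_apply,
      hTs_apply]
  -- pull back to the original space
  set ψ := φ.restrictScalars F with hψ
  set ofe := Module.AEval'.of f with hofe
  set Slin : Module.End F (Fin n → F) :=
    ofe.symm.toLinearMap ∘ₗ ψ.symm.toLinearMap ∘ₗ Ts ∘ₗ ψ.toLinearMap ∘ₗ ofe.toLinearMap
    with hSlin
  have hSlin_apply : ∀ v, Slin v = ofe.symm (ψ.symm (Ts (ψ (ofe v)))) := fun v => rfl
  have hSS : Slin * Slin = 1 := by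
    apply LinearMap.ext
    intro v
    show Slin (Slin v) = v
    rw [hSlin_apply, hSlin_apply]
    rw [ofe.apply_symm_apply, ψ.apply_symm_apply, hTsTs, ψ.symm_apply_apply,
      ofe.symm_apply_apply]
  have hSf : Slin * f = -(f * Slin) := by
    apply LinearMap.ext
    intro v
    show Slin (f v) = -(f (Slin v))
    rw [hSlin_apply, hSlin_apply]
    have e1 : ofe (f v) = (X : F[X]) • ofe v := (Module.AEval'.X_smul_of f v).symm
    have e2 : ψ ((X : F[X]) • ofe v) = (X : F[X]) • ψ (ofe v) := φ.map_smul _ _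
    have e4 : ψ.symm ((X : F[X]) • Ts (ψ (ofe v))) = (X : F[X]) • ψ.symm (Ts (ψ (ofe v))) :=
      φ.symm.map_smul _ _
    rw [e1, e2, hTsX, map_neg, e4, map_neg]
    have e3 : ofe.symm ((X : F[X]) • (ψ.symm (Ts (ψ (ofe v)))))
        = f (ofe.symm (ψ.symm (Ts (ψ (ofe v))))) := Module.AEval.of_symm_X_smul _ _
    rw [e3]
  refine ⟨LinearMap.toMatrixAlgEquiv' Slin, ?_, ?_⟩
  · rw [← map_mul, hSS, map_one]
  · have hA' : (A : Matrix (Fin n) (Fin n) F) = LinearMap.toMatrixAlgEquiv' f := by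
      rw [hf]
      exact (Matrix.toLinAlgEquiv'.symm_apply_apply A).symm
    rw [hA', ← map_mul, ← map_mul, hSf, map_neg]




/-- Over an algebraically closed field of characteristic `0`, every nilpotent
`n × n` matrix (`n > 1`) is an additive commutator of two idempotent matrices. -/
theorem nilpotent_eq_commutator_of_idempotents (F : Type*) [Field F]
    [IsAlgClosed F] [CharZero F] (n : ℕ) (hn : 1 < n)
    (A : Matrix (Fin n) (Fin n) F) (hA : IsNilpotent A) :
    ∃ E G : Matrix (Fin n) (Fin n) F,
      IsIdempotentElem E ∧ IsIdempotentElem G ∧ A = E * G - G * E := by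
  obtain ⟨S, hS, hSA⟩ := exists_anticommuting_involution F A hA
  exact commutator_of_involution A S hA hS hSA
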